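/- Let X₁, ..., X_N be compact metric spaces with Borel probability measures μ₁, ..., μ_N, let c : ∏ᵢ Xᵢ → ℝ be continuous, and let φᵢ : Xᵢ → ℝ be continuous with ∑ᵢ φᵢ(xᵢ) ≤ c(x₁,...,x_N) for all points. For 2 ≤ j ≤ N-1 define c_j(x₁,...,x_j) = inf{c(x₁,...,x_N) - ∑_{i=j+1}^N φᵢ(xᵢ) : (x_{j+1},...,x_N) ∈ ∏_{i>j} Xᵢ}. Let S = {c = ∑φᵢ} and S_j = {c_j = ∑_{i≤j} φᵢ}. Then the projection of S onto X₁ × ... × X_j equals S_j. -/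

import Mathlib

open MeasureTheory

def PartialProd {N : ℕ} (X : Fin N → Type*) (j : ℕ) : Type _ :=
  ∀ i : {i : Fin N // (i : ℕ) < j}, X i.1

instance {N : ℕ} (X : Fin N → Type*) [∀ i, TopologicalSpace (X i)] (j : ℕ) :
    TopologicalSpace (PartialProd X j) := by
  unfold PartialProd; infer_instance

instance {N : ℕ} (X : Fin N → Type*) [∀ i, MeasurableSpace (X i)] (j : ℕ) :
    MeasurableSpace (PartialProd X j) := by
  unfold PartialProd; infer_instance

def pproj {N : ℕ} (X : Fin N → Type*) {j k : ℕ} (h : j ≤ k) :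
    PartialProd X k → PartialProd X j :=
  fun ω i => ω ⟨i.1, lt_of_lt_of_le i.2 h⟩

theorem stmt15 {N : ℕ} (X : Fin N → Type*) [∀ i, MetricSpace (X i)]
    [∀ i, CompactSpace (X i)] [∀ i, MeasurableSpace (X i)] [∀ i, BorelSpace (X i)]
    (μ : ∀ i, Measure (X i)) [∀ i, IsProbabilityMeasure (μ i)]
    (c : PartialProd X N → ℝ) (hc : Continuous c)
    (φ : ∀ i : Fin N, X i → ℝ) (hφ : ∀ i, Continuous (φ i))
    (hle : ∀ ω : PartialProd X N, ∑ i : Fin N, φ i (ω ⟨i, i.isLt⟩) ≤ c ω)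
    (j : ℕ) (hj2 : 2 ≤ j) (hjN : j ≤ N - 1)
    (hjN' : j ≤ N)
    (cj : PartialProd X j → ℝ)
    (hcj : cj = fun u => sInf {r : ℝ | ∃ ω : PartialProd X N, pproj X hjN' ω = u ∧
      r = c ω - ∑ i : {i : Fin N // j ≤ (i : ℕ)}, φ i.1 (ω ⟨i.1, i.1.isLt⟩)})
    (S : Set (PartialProd X N))
    (hS : S = {ω | c ω = ∑ i : Fin N, φ i (ω ⟨i, i.isLt⟩)})
    (Sj : Set (PartialProd X j))
    (hSj : Sj = {u | cj u = ∑ i : {i : Fin N // (i : ℕ) < j}, φ i.1 (u i)}) :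
    pproj X hjN' '' S = Sj := by
  haveI : ∀ i, Nonempty (X i) := fun i => (μ i).nonempty_of_neZero
  set F : PartialProd X N → ℝ :=
    fun ω => c ω - ∑ i : {i : Fin N // j ≤ (i : ℕ)}, φ i.1 (ω ⟨i.1, i.1.isLt⟩) with hF
  set G : PartialProd X j → ℝ :=
    fun u => ∑ i : {i : Fin N // (i : ℕ) < j}, φ i.1 (u i) with hG
  -- sum splitting
  have hsplit : ∀ ω : PartialProd X N,
      ∑ i : Fin N, φ i (ω ⟨i, i.isLt⟩) =
      G (pproj X hjN' ω) + ∑ i : {i : Fin N // j ≤ (i : ℕ)}, φ i.1 (ω ⟨i.1, i.1.isLt⟩) := by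
    intro ω
    rw [hG]
    rw [← Fintype.sum_subtype_add_sum_subtype (fun i : Fin N => (i : ℕ) < j)
      (fun i => φ i (ω ⟨i, i.isLt⟩))]
    congr 1
    exact Fintype.sum_equiv (Equiv.subtypeEquivRight fun i => not_lt)
      _ _ (fun i => rfl)
  have hGle : ∀ ω : PartialProd X N, G (pproj X hjN' ω) ≤ F ω := fun ω => by
    have := hle ω; rw [hsplit ω] at this; simpa [hF] using le_sub_iff_add_le.2 this
  have hlb : ∀ u, ∀ r ∈ {r : ℝ | ∃ ω : PartialProd X N, pproj X hjN' ω = u ∧ r = F ω},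
      G u ≤ r := by
    rintro u r ⟨ω, hωu, rfl⟩
    simpa [hωu] using hGle ω
  ext u
  constructor
  · rintro ⟨ω, hωS, rfl⟩
    rw [hS] at hωS
    have hFω : F ω = G (pproj X hjN' ω) := by
      rw [Set.mem_setOf_eq] at hωS
      have h2 : F ω = c ω - ∑ i : {i : Fin N // j ≤ (i : ℕ)}, φ i.1 (ω ⟨i.1, i.1.isLt⟩) := rfl
      rw [h2, hωS, hsplit ω]; ring
    rw [hSj, Set.mem_setOf_eq, hcj]
    refine le_antisymm ?_ ?_
    · exact csInf_le ⟨G (pproj X hjN' ω), hlb _⟩ ⟨ω, rfl, hFω.symm⟩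
    · exact le_csInf ⟨F ω, ω, rfl, rfl⟩ (hlb _)
  · intro hu
    rw [hSj, Set.mem_setOf_eq, hcj] at hu
    -- compactness: infimum attained
    haveI : CompactSpace (PartialProd X N) := by unfold PartialProd; infer_instance
    haveI : T1Space (PartialProd X j) := by unfold PartialProd; infer_instance
    have hppc : Continuous (pproj X (j := j) (k := N) hjN') := by
      apply continuous_pi
      intro i
      exact continuous_apply (A := fun i : {i : Fin N // (i : ℕ) < N} => X i.1) _
    have hFc : Continuous F := by
      apply hc.sub
      apply continuous_finset_sum
      intro i _
      exact (hφ i.1).comp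
        (continuous_apply (A := fun i : {i : Fin N // (i : ℕ) < N} => X i.1) _)
    set K : Set (PartialProd X N) := pproj X hjN' ⁻¹' {u} with hK
    have hKne : K.Nonempty := by
      refine ⟨fun i => if h : (i.1 : ℕ) < j then u ⟨i.1, h⟩ else Classical.arbitrary _, ?_⟩
      funext i
      simp [pproj, i.2]
    have hKc : IsCompact K := (IsClosed.preimage hppc isClosed_singleton).isCompact
    obtain ⟨ω₁, hω₁K, hmin⟩ := hKc.exists_isMinOn hKne hFc.continuousOn
    have hω₁u : pproj X hjN' ω₁ = u := hω₁K
    have hinf : sInf {r : ℝ | ∃ ω : PartialProd X N, pproj X hjN' ω = u ∧ r = F ω} = F ω₁ := by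
      refine le_antisymm (csInf_le ⟨G u, hlb u⟩ ⟨ω₁, hω₁u, rfl⟩) ?_
      refine le_csInf ⟨F ω₁, ω₁, hω₁u, rfl⟩ ?_
      rintro r ⟨ω, hωu, rfl⟩
      exact hmin hωu
    refine ⟨ω₁, ?_, hω₁u⟩
    rw [hS, Set.mem_setOf_eq, hsplit ω₁, hω₁u]
    have h3 : F ω₁ = G u := by rw [← hinf]; exact hu
    have h4 : c ω₁ - ∑ i : {i : Fin N // j ≤ (i : ℕ)}, φ i.1 (ω₁ ⟨i.1, i.1.isLt⟩) = G u := h3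
    linarith [h4]
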